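/- Let n ≥ 2, let M be a nonzero real number with s = sgn(M) and M̃ = |M|, and let y₀, y₁, …, y_{n−1} be real numbers. Define the linear factors form map f_n(y) = y + (−1)^{n−1}·s·M̃·∏_{i=0}^{n−1}(y − y_i), the transformation T_n(x) = s·M̃^{−1/(n−1)}·x + y₀, the transformed fixed points x_i = s·M̃^{1/(n−1)}·(y_i − y₀) for i = 1, …, n−1, and the canonical polynomial map g_n(x) = x + (−1)^{n−1}·sⁿ·x·∏_{i=1}^{n−1}(x − x_i). Then f_n(T_n(x)) = T_n(g_n(x)) for every x ∈ ℝ; since T_n is an affine homeomorphism of ℝ, the maps f_n and g_n are topologically conjugate. -/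

import Mathlib

/-- the linear factors form map of degree `n` is conjugate,
via the affine homeomorphism `T_n`, to the canonical polynomial map. -/
theorem stmt_17 (n : ℕ) (hn : 2 ≤ n) (M : ℝ) (hM : M ≠ 0)
    (s Mt : ℝ) (hs : s = if 0 < M then 1 else -1) (hMt : Mt = |M|)
    (Y : ℕ → ℝ) :
    let f : ℝ → ℝ := fun y =>
      y + (-1) ^ (n - 1) * s * Mt * ∏ i ∈ Finset.range n, (y - Y i)
    let T : ℝ → ℝ := fun x => s * Mt ^ (-(1 : ℝ) / ((n : ℝ) - 1)) * x + Y 0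
    let X : ℕ → ℝ := fun i => s * Mt ^ ((1 : ℝ) / ((n : ℝ) - 1)) * (Y i - Y 0)
    let g : ℝ → ℝ := fun x =>
      x + (-1) ^ (n - 1) * s ^ n * x * ∏ i ∈ Finset.Ico 1 n, (x - X i)
    (∀ x : ℝ, f (T x) = T (g x)) ∧ ∃ h : ℝ ≃ₜ ℝ, ∀ x : ℝ, h x = T x := by
  intro f T X g
  have hMtpos : (0:ℝ) < Mt := by rw [hMt]; exact abs_pos.mpr hM
  have hs2 : s * s = 1 := by rw [hs]; split <;> norm_num
  have hs0 : s ≠ 0 := by rw [hs]; split <;> norm_num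
  have hn1 : ((n : ℝ) - 1) ≠ 0 := by
    have : (2:ℝ) ≤ (n:ℝ) := by exact_mod_cast hn
    linarith
  set a : ℝ := -(1:ℝ)/((n:ℝ)-1) with ha
  set b : ℝ := (1:ℝ)/((n:ℝ)-1) with hb
  have hrpow : Mt ^ a * Mt ^ b = 1 := by
    rw [← Real.rpow_add hMtpos, show a + b = 0 by rw [ha, hb]; ring, Real.rpow_zero]
  have hc0 : s * Mt ^ a ≠ 0 :=
    mul_ne_zero hs0 (ne_of_gt (Real.rpow_pos_of_pos hMtpos a))
  refine ⟨?_, ⟨affineHomeomorph _ (Y 0) hc0, fun x => rfl⟩⟩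
  intro x
  set c : ℝ := s * Mt ^ a with hc
  have key : ∀ i, T x - Y i = c * (x - X i) := by
    intro i
    have h1 : c * (x - X i)
        = c * x - (s*s) * (Mt ^ a * Mt ^ b) * (Y i - Y 0) := by
      simp only [X, hc]; ring
    rw [h1, hs2, hrpow]
    show T x - Y i = _
    simp only [T]; ring
  have hX0 : X 0 = 0 := by simp [X]
  have hprod : ∏ i ∈ Finset.range n, (T x - Y i)
      = c ^ n * (x * ∏ i ∈ Finset.Ico 1 n, (x - X i)) := by
    calc ∏ i ∈ Finset.range n, (T x - Y i)
        = ∏ i ∈ Finset.range n, (c * (x - X i)) := by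
          exact Finset.prod_congr rfl fun i _ => key i
      _ = c ^ n * ∏ i ∈ Finset.range n, (x - X i) := by
          rw [Finset.prod_mul_distrib, Finset.prod_const, Finset.card_range]
      _ = c ^ n * ((x - X 0) * ∏ i ∈ Finset.Ico 1 n, (x - X i)) := by
          rw [Finset.prod_range_eq_mul_Ico _ (by omega)]
      _ = _ := by rw [hX0]; ring
  have hcn : s * Mt * c ^ n = c * s ^ n := by
    have h2 : c ^ n = s ^ n * Mt ^ (a * n) := by
      rw [hc, mul_pow, ← Real.rpow_natCast (Mt ^ a) n, ← Real.rpow_mul hMtpos.le]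
    have h3 : Mt * Mt ^ (a * n) = Mt ^ a := by
      nth_rewrite 1 [← Real.rpow_one Mt]
      rw [← Real.rpow_add hMtpos]
      congr 1
      rw [ha]; field_simp; ring
    rw [h2, hc]
    calc s * Mt * (s ^ n * Mt ^ (a * n))
        = s * s ^ n * (Mt * Mt ^ (a * n)) := by ring
      _ = s * Mt ^ a * s ^ n := by rw [h3]; ring
  show T x + (-1) ^ (n-1) * s * Mt * ∏ i ∈ Finset.range n, (T x - Y i)
      = c * (g x) + Y 0
  rw [hprod]
  have : T x = c * x + Y 0 := rfl
  rw [this]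
  simp only [g]
  have : (-1:ℝ) ^ (n-1) * s * Mt * (c ^ n * (x * ∏ i ∈ Finset.Ico 1 n, (x - X i)))
      = (-1) ^ (n-1) * (s * Mt * c ^ n) * (x * ∏ i ∈ Finset.Ico 1 n, (x - X i)) := by ring
  rw [this, hcn]
  ring
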